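/- Let q = 2^f ≥ 4 and I = {0, f, 2f/gcd(3,f), 4f/gcd(3,f)}. Let b ∈ F_{q²}^× satisfy b + b^q = 1 and b^{q+1} ≠ 1. Then there exists an element a of multiplicative order q+1 in F_{q²}^× such that: (1) (1 + b + b²)^{2^i} ≠ a + a⁻¹ + 1 for all i ∈ I; (2) (1 + b + b²)^{2^i} ≠ a(1 + b + b³ + b⁴) + a⁻¹(b² + b³ + b⁴) for all i ∈ I; (3) a + a⁻¹ + 1 ≠ a(1 + b + b³ + b⁴) + a⁻¹(b² + b³ + b⁴); (4) a + a⁻¹ + 1 ≠ 0. -/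

import Mathlib

open Polynomial Finset

lemma le_sq_totient : ∀ n : ℕ, Odd n → n ≤ n.totient ^ 2 := by
  intro n
  induction n using Nat.recOnPosPrimePosCoprime with
  | prime_pow p k hp hk =>
    intro hodd
    have hp' : p.Prime := hp
    have hp2 : p ≠ 2 := by
      rintro rfl
      exact (Nat.not_odd_iff_even.mpr (Nat.even_pow.mpr ⟨even_two, hk.ne'⟩)) hodd
    have hp3 : 3 ≤ p := by
      rcases hp'.two_le.lt_or_eq with h | h
      · omega
      · omega
    rw [Nat.totient_prime_pow hp' hk]
    obtain ⟨m, rfl⟩ : ∃ m, p = m + 1 := ⟨p - 1, by omega⟩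
    have hm : 2 ≤ m := by omega
    simp only [Nat.add_sub_cancel]
    calc (m+1) ^ k = (m+1) ^ (k-1) * (m+1) := by
          rw [← pow_succ]; congr 1; omega
      _ ≤ ((m+1) ^ (k-1)) ^ 2 * m^2 := by
          apply Nat.mul_le_mul
          · exact Nat.le_self_pow (by norm_num) _
          · nlinarith
      _ = ((m+1) ^ (k-1) * m) ^ 2 := by ring
  | zero => intro h; simp at h
  | one => intro _; simp
  | coprime a b ha hb hab iha ihb =>
    intro hodd
    rw [Nat.totient_mul hab]
    have hoa : Odd a := (Nat.odd_mul.mp hodd).1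
    have hob : Odd b := (Nat.odd_mul.mp hodd).2
    calc a * b ≤ a.totient ^2 * b.totient ^2 := Nat.mul_le_mul (iha hoa) (ihb hob)
      _ = (a.totient * b.totient)^2 := by ring

lemma card_quad_le_two (F : Type) [Field F] [Fintype F] [DecidableEq F] (p q r : F)
    (hpq : p ≠ 0 ∨ q ≠ 0) :
    (Finset.univ.filter (fun a : Fˣ => p * (a:F)^2 + q * (a:F) + r = 0)).card ≤ 2 := by
  set P : F[X] := C p * X^2 + C q * X + C r with hP
  have hP0 : P ≠ 0 := by
    intro h
    rcases hpq with h1 | h1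
    · apply h1
      have := congrArg (fun Q => Polynomial.coeff Q 2) h
      simpa [hP, coeff_C] using this
    · apply h1
      have := congrArg (fun Q => Polynomial.coeff Q 1) h
      simpa [hP, coeff_C] using this
  have hdeg : P.natDegree ≤ 2 := by
    apply Polynomial.natDegree_le_iff_coeff_eq_zero.mpr
    intro n hn
    simp only [hP, coeff_add, coeff_C_mul, coeff_X_pow, coeff_X, coeff_C]
    have h1 : ¬ (2 = n) := by omega
    have h2 : ¬ (n = 1) := by omega
    have h3 : ¬ (n = 0) := by omega
    have h4 : ¬ (n = 2) := by omega
    have h5 : ¬ (1 = n) := by omega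
    simp [h1, h2, h3, h4, h5]
  calc (Finset.univ.filter (fun a : Fˣ => p * (a:F)^2 + q * (a:F) + r = 0)).card
      ≤ P.roots.toFinset.card := by
        refine Finset.card_le_card_of_injOn (fun a => (a : F)) ?_ ?_
        · intro a ha
          simp only [Finset.coe_filter, Finset.mem_coe, Finset.mem_filter, Set.mem_setOf_eq] at ha ⊢
          rw [Multiset.mem_toFinset, Polynomial.mem_roots hP0]
          simp only [Polynomial.IsRoot, hP, eval_add, eval_mul, eval_pow, eval_C, eval_X]
          exact ha.2
        · intro a _ b _ hab
          exact Units.ext hab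
    _ ≤ Multiset.card P.roots := Multiset.toFinset_card_le _
    _ ≤ P.natDegree := Polynomial.card_roots' P
    _ ≤ 2 := hdeg

theorem stmt_9 (f q : ℕ) (hq : q = 2 ^ f) (hq4 : 4 ≤ q)
    (F : Type) [Field F] [Fintype F] (hF : Fintype.card F = q ^ 2)
    (b : F) (hb0 : b ≠ 0) (hb1 : b + b ^ q = 1) (hb2 : b ^ (q + 1) ≠ 1) :
    ∃ a : Fˣ, orderOf a = q + 1 ∧
      (∀ i ∈ ({0, f, 2 * f / Nat.gcd 3 f, 4 * f / Nat.gcd 3 f} : Set ℕ),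
        (1 + b + b ^ 2) ^ 2 ^ i ≠ (a : F) + (a : F)⁻¹ + 1) ∧
      (∀ i ∈ ({0, f, 2 * f / Nat.gcd 3 f, 4 * f / Nat.gcd 3 f} : Set ℕ),
        (1 + b + b ^ 2) ^ 2 ^ i ≠
          (a : F) * (1 + b + b ^ 3 + b ^ 4) + (a : F)⁻¹ * (b ^ 2 + b ^ 3 + b ^ 4)) ∧
      (a : F) + (a : F)⁻¹ + 1 ≠
        (a : F) * (1 + b + b ^ 3 + b ^ 4) + (a : F)⁻¹ * (b ^ 2 + b ^ 3 + b ^ 4) ∧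
      (a : F) + (a : F)⁻¹ + 1 ≠ 0 := by
  classical
  -- basic setup
  have hf2 : 2 ≤ f := by
    by_contra h
    interval_cases f <;> omega
  -- characteristic 2
  have hcard : Fintype.card F = 2 ^ (2 * f) := by
    rw [hF, hq]; ring
  obtain ⟨p, hpchar⟩ := CharP.exists F
  have hpp : p.Prime := by
    have h1 : (1:ℕ) < Fintype.card F := Fintype.one_lt_card
    exact CharP.char_is_prime F p
  obtain ⟨n, hn, hcard'⟩ := FiniteField.card F p
  have hp2 : p = 2 := by
    have : p ∣ 2 ^ (2 * f) := by
      rw [← hcard, hcard']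
      exact dvd_pow_self p n.pos.ne'
    have := (Nat.prime_dvd_prime_iff_eq hpp Nat.prime_two).mp
      (hpp.dvd_of_dvd_pow this)
    exact this
  subst hp2
  haveI : CharP F 2 := hpchar
  have h2 : (2 : F) = 0 := by
    exact_mod_cast CharP.cast_eq_zero F 2
  have hbq : b ^ q = 1 + b := by linear_combination hb1 - b * h2
  have hbne1 : b ≠ 1 := by
    intro h; rw [h] at hbq; simp at hbq
  -- 1 + b + b² ≠ 0
  have hc0 : (1 : F) + b + b ^ 2 ≠ 0 := by
    intro hcc
    have hsq : b ^ 2 = b + 1 := by linear_combination hcc + (-b - 1) * h2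
    have hiter : ∀ k : ℕ, (Even k → b ^ 2 ^ k = b) ∧ (¬ Even k → b ^ 2 ^ k = b + 1) := by
      intro k
      induction k with
      | zero => exact ⟨fun _ => by simp, fun h => absurd Even.zero h⟩
      | succ k ih =>
        have hstep : b ^ 2 ^ (k+1) = (b ^ 2 ^ k) ^ 2 := by
          rw [← pow_mul, pow_succ]
        constructor
        · intro he
          have hk : ¬ Even k := by simp [Nat.even_add_one] at he; simp [he]
          rw [hstep, ih.2 hk]
          linear_combination hsq + b * h2 + h2
        · intro he
          have hk : Even k := by simp [Nat.even_add_one] at he; exact he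
          rw [hstep, ih.1 hk]
          exact hsq
    by_cases hev : Even f
    · have := (hiter f).1 hev
      rw [hq] at hb1
      rw [this] at hb1
      exact one_ne_zero (by linear_combination -hb1 + b * h2 : (1:F) = 0)
    · have := (hiter f).2 hev
      apply hb2
      rw [pow_succ, hq, this]
      linear_combination hsq + b * h2
  have hbcube : b ^ 3 ≠ 1 := by
    intro h3
    apply hc0
    have : (b - 1) * (b ^ 2 + b + 1) = 0 := by linear_combination h3
    rcases mul_eq_zero.mp this with h | h
    · exact absurd (by linear_combination h : b = 1) hbne1
    · linear_combination h
  have hu : (1 : F) + b + b ^ 3 + b ^ 4 ≠ 0 := by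
    intro huu
    have : (1 + b) * (1 + b ^ 3) = 0 := by linear_combination huu
    rcases mul_eq_zero.mp this with h | h
    · exact hbne1 (by linear_combination h - h2 : b = 1)
    · exact hbcube (by linear_combination h - h2 : b ^ 3 = 1)
  -- cardinality of units
  have hcardu : Fintype.card Fˣ = q ^ 2 - 1 := by
    rw [Fintype.card_units, hF]
  have hdvd : q + 1 ∣ Fintype.card Fˣ := by
    rw [hcardu]
    exact ⟨q - 1, by cases q with | zero => omega | succ m => simp [Nat.succ_sub_one]; ring_nf; omega⟩
  have hainv : ∀ a : Fˣ, (a : F) * (a : F)⁻¹ = 1 := fun a => mul_inv_cancel₀ (Units.ne_zero a)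
  -- order dividing 3 is impossible
  have hord3 : ∀ a : Fˣ, orderOf a = q + 1 → (a : F) + (a : F)⁻¹ + 1 ≠ 0 := by
    intro a ha h
    have h3 : (a : F) ^ 3 = 1 := by
      linear_combination ((a:F) - 1) * (a:F) * h + (1 - (a:F)) * (hainv a)
    have h3' : a ^ 3 = 1 := Units.ext (by push_cast; exact h3)
    have := orderOf_dvd_of_pow_eq_one h3'
    rw [ha] at this
    have := Nat.le_of_dvd (by norm_num) this
    omega
  by_cases hf23 : f = 2
  · subst hf23
    subst hq
    have hb4 : b ^ 4 = 1 + b := by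
      rw [show (4:ℕ) = 2^2 by norm_num]; exact hbq
    have hAmul : ((1:F) + b + b^2 + b^3) * b^3 = 1 := by
      linear_combination ((1 : F) + b + b ^ 2) * hb4 + (b + b ^ 2 + b ^ 3) * h2
    set aU : Fˣ := ⟨1+b+b^2+b^3, b^3, hAmul, by linear_combination hAmul⟩ with hadef
    have hcoe : (aU : F) = 1+b+b^2+b^3 := rfl
    have hicoe : ((aU : F))⁻¹ = b^3 := inv_eq_of_mul_eq_one_right hAmul
    have h5 : aU ^ 5 = 1 := by
      apply Units.ext
      rw [Units.val_pow_eq_pow_val]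
      show ((1:F)+b+b^2+b^3) ^ 5 = 1
      linear_combination (b + b ^ 3 + b ^ 6 + b ^ 7 + b ^ 9 + b ^ 10 + b ^ 11) * hb4 + ((3) * b + (8) * b ^ 2 + (18) * b ^ 3 + (33) * b ^ 4 + (50) * b ^ 5 + (68) * b ^ 6 + (78) * b ^ 7 + (78) * b ^ 8 + (68) * b ^ 9 + (51) * b ^ 10 + (33) * b ^ 11 + (18) * b ^ 12 + (7) * b ^ 13 + (2) * b ^ 14) * h2
    have hne1 : aU ≠ 1 := by
      intro hcon
      have h1 : ((1:F)+b+b^2+b^3) = 1 := by rw [← hcoe, hcon]; rfl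
      have hb12 : b * (1+b+b^2) = 0 := by linear_combination h1
      rcases mul_eq_zero.mp hb12 with h' | h'
      · exact hb0 h'
      · exact hc0 h'
    have horder : orderOf aU = 5 := by
      rcases (Nat.dvd_prime (by norm_num)).mp (orderOf_dvd_of_pow_eq_one h5) with h | h
      · exact absurd (orderOf_eq_one_iff.mp h) hne1
      · exact h
    have horder' : orderOf aU = 2^2 + 1 := by rw [horder]; norm_num
    have hc4 : ((1:F)+b+b^2) ^ 4 = 1+b+b^2 := by
      linear_combination (b + b ^ 4) * hb4 + ((2) * b + (5) * b ^ 2 + (8) * b ^ 3 + (10) * b ^ 4 + (8) * b ^ 5 + (5) * b ^ 6 + (2) * b ^ 7) * h2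
    have hc16 : ((1:F)+b+b^2) ^ 16 = 1+b+b^2 := by
      rw [show (16:ℕ) = 4*4 by norm_num, pow_mul, hc4, hc4]
    have hc256 : ((1:F)+b+b^2) ^ 256 = 1+b+b^2 := by
      rw [show (256:ℕ) = 16*16 by norm_num, pow_mul, hc16, hc16]
    have key1 : (1:F)+b+b^2 ≠ (aU : F) + (aU : F)⁻¹ + 1 := by
      rw [hicoe, hcoe]
      intro h
      exact one_ne_zero (α := F) (by linear_combination ((1 : F)) * h + ((1 : F) + b ^ 3) * h2)
    have key2 : (1:F)+b+b^2 ≠ (aU : F) * (1 + b + b ^ 3 + b ^ 4) + (aU : F)⁻¹ * (b ^ 2 + b ^ 3 + b ^ 4) := by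
      rw [hicoe, hcoe]
      intro h
      exact one_ne_zero (α := F) (by linear_combination (b + b ^ 2) * h + ((1 : F) + b + b ^ 4) * hb4 + ((1 : F) + b + b ^ 2 + b ^ 3 + (2) * b ^ 4 + (3) * b ^ 5 + (3) * b ^ 6 + (3) * b ^ 7 + (2) * b ^ 8 + b ^ 9) * h2)
    have key3 : (aU : F) + (aU : F)⁻¹ + 1 ≠ (aU : F) * (1 + b + b ^ 3 + b ^ 4) + (aU : F)⁻¹ * (b ^ 2 + b ^ 3 + b ^ 4) := by
      rw [hicoe, hcoe]
      intro h
      exact one_ne_zero (α := F) (by linear_combination ((1 : F) + b + b ^ 2) * h + (b ^ 2 + b ^ 4) * hb4 + (b ^ 2 + (2) * b ^ 3 + (3) * b ^ 4 + (4) * b ^ 5 + (4) * b ^ 6 + (4) * b ^ 7 + (2) * b ^ 8 + b ^ 9) * h2)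
    refine ⟨aU, horder', ?_, ?_, key3, hord3 aU horder'⟩
    · intro i hi
      simp only [Set.mem_insert_iff, Set.mem_singleton_iff] at hi
      rcases hi with rfl | rfl | rfl | rfl
      · rw [pow_zero, pow_one]; exact key1
      · rw [show (2:ℕ)^2 = 4 by norm_num, hc4]; exact key1
      · rw [show (2:ℕ)^(2*2/Nat.gcd 3 2) = 16 by norm_num, hc16]; exact key1
      · rw [show (2:ℕ)^(4*2/Nat.gcd 3 2) = 256 by norm_num, hc256]; exact key1
    · intro i hi
      simp only [Set.mem_insert_iff, Set.mem_singleton_iff] at hi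
      rcases hi with rfl | rfl | rfl | rfl
      · rw [pow_zero, pow_one]; exact key2
      · rw [show (2:ℕ)^2 = 4 by norm_num, hc4]; exact key2
      · rw [show (2:ℕ)^(2*2/Nat.gcd 3 2) = 16 by norm_num, hc16]; exact key2
      · rw [show (2:ℕ)^(4*2/Nat.gcd 3 2) = 256 by norm_num, hc256]; exact key2
  by_cases hf3 : f = 3
  · subst hf3
    subst hq
    have hb8 : b ^ 8 = 1 + b := by
      rw [show (8:ℕ) = 2^3 by norm_num]; exact hbq
    have hfac : ((1:F)+b+b^2) * (b^6+b^5+b^3+b^2+1) = 0 := by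
      linear_combination ((1 : F)) * hb8 + ((1 : F) + b + b ^ 2 + b ^ 3 + b ^ 4 + b ^ 5 + b ^ 6 + b ^ 7) * h2
    have hS : (b:F)^6+b^5+b^3+b^2+1 = 0 := by
      rcases mul_eq_zero.mp hfac with h' | h'
      · exact absurd h' hc0
      · exact h'
    have hAmul : ((1:F) + b^2 + b^5) * (1 + b + b^2 + b^4 + b^5) = 1 := by
      linear_combination (b + b ^ 4) * hS + (b ^ 2 + b ^ 5) * h2
    set aU : Fˣ := ⟨1 + b^2 + b^5, 1 + b + b^2 + b^4 + b^5, hAmul, by linear_combination hAmul⟩ with hadef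
    have hcoe : (aU : F) = 1 + b^2 + b^5 := rfl
    have hicoe : ((aU : F))⁻¹ = 1 + b + b^2 + b^4 + b^5 := inv_eq_of_mul_eq_one_right hAmul
    have h9 : aU ^ 9 = 1 := by
      apply Units.ext
      rw [Units.val_pow_eq_pow_val]
      show ((1:F) + b^2 + b^5) ^ 9 = 1
      linear_combination (b ^ 2 + b ^ 4 + b ^ 6 + b ^ 10 + b ^ 11 + b ^ 14 + b ^ 15 + b ^ 17 + b ^ 20 + b ^ 25 + b ^ 26 + b ^ 27 + b ^ 33 + b ^ 35 + b ^ 36 + b ^ 37 + b ^ 38 + b ^ 39) * hS + ((4) * b ^ 2 + (17) * b ^ 4 + (4) * b ^ 5 + (41) * b ^ 6 + (35) * b ^ 7 + (62) * b ^ 8 + (125) * b ^ 9 + (80) * b ^ 10 + (251) * b ^ 11 + (167) * b ^ 12 + (314) * b ^ 13 + (395) * b ^ 14 + (293) * b ^ 15 + (633) * b ^ 16 + (376) * b ^ 17 + (630) * b ^ 18 + (665) * b ^ 19 + (439) * b ^ 20 + (844) * b ^ 21 + (440) * b ^ 22 + (629) * b ^ 23 + (648) * b ^ 24 + (314) * b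 ^ 25 + (629) * b ^ 26 + (293) * b ^ 27 + (314) * b ^ 28 + (377) * b ^ 29 + (104) * b ^ 30 + (251) * b ^ 31 + (125) * b ^ 32 + (62) * b ^ 33 + (126) * b ^ 34 + (17) * b ^ 35 + (41) * b ^ 36 + (35) * b ^ 37 + (-2) * b ^ 38 + (16) * b ^ 39 + (3) * b ^ 40 + (-2) * b ^ 41 + (3) * b ^ 42 + (-1) * b ^ 43 + (-1) * b ^ 44) * h2
    have hne3 : aU ^ 3 ≠ 1 := by
      intro hcon
      have h : ((1:F) + b^2 + b^5) ^ 3 = 1 := by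
        have := congrArg (Units.val) hcon
        rw [Units.val_pow_eq_pow_val] at this
        exact this
      exact one_ne_zero (α := F) (by linear_combination (b + b ^ 2 + b ^ 4) * h + ((1 : F) + b ^ 2 + b ^ 5 + b ^ 9 + b ^ 10 + b ^ 12 + b ^ 13) * hS + ((-1) * b ^ 2 + (-2) * b ^ 3 + (-2) * b ^ 4 + (-3) * b ^ 5 + (-5) * b ^ 6 + (-3) * b ^ 7 + (-6) * b ^ 8 + (-5) * b ^ 9 + (-3) * b ^ 10 + (-7) * b ^ 11 + (-3) * b ^ 12 + (-4) * b ^ 13 + (-4) * b ^ 14 + (-2) * b ^ 15 + (-3) * b ^ 16 + (-1) * b ^ 17 + (-1) * b ^ 18 + (-1) * b ^ 19) * h2)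
    have horder : orderOf aU = 9 := by
      have hdvd9 : orderOf aU ∣ 3 ^ 2 := by
        rw [show (3:ℕ)^2 = 9 by norm_num]
        exact orderOf_dvd_of_pow_eq_one h9
      obtain ⟨k, hk, heq⟩ := (Nat.dvd_prime_pow Nat.prime_three).mp hdvd9
      interval_cases k
      · rw [pow_zero] at heq
        exact absurd (orderOf_eq_one_iff.mp heq) (by
          intro hcon
          exact hne3 (by rw [hcon, one_pow]))
      · rw [heq]
        exfalso
        exact hne3 (by
          have := pow_orderOf_eq_one aU
          rw [heq, pow_one] at this
          exact this)
      · rw [heq]; norm_num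
    have horder' : orderOf aU = 2^3 + 1 := by rw [horder]; norm_num
    have hc8 : ((1:F)+b+b^2) ^ 8 = 1+b+b^2 := by
      linear_combination (b + b ^ 2 + b ^ 3 + b ^ 8 + b ^ 9 + b ^ 10) * hS + ((3) * b + (17) * b ^ 2 + (55) * b ^ 3 + (132) * b ^ 4 + (251) * b ^ 5 + (391) * b ^ 6 + (507) * b ^ 7 + (552) * b ^ 8 + (507) * b ^ 9 + (391) * b ^ 10 + (251) * b ^ 11 + (132) * b ^ 12 + (55) * b ^ 13 + (17) * b ^ 14 + (3) * b ^ 15) * h2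
    have hc4 : ((1:F)+b+b^2) ^ 4 = b + b ^ 4 := by
      linear_combination ((1 : F) + b + b ^ 2) * hS + (b + (4) * b ^ 2 + (7) * b ^ 3 + (8) * b ^ 4 + (7) * b ^ 5 + (4) * b ^ 6 + b ^ 7) * h2
    have hc2 : ((1:F)+b+b^2) ^ 2 = (1 : F) + b ^ 2 + b ^ 4 := by
      linear_combination (b + b ^ 2 + b ^ 3) * h2
    have hc16 : ((1:F)+b+b^2) ^ 16 = (1 : F) + b ^ 2 + b ^ 4 := by
      rw [show (16:ℕ) = 8*2 by norm_num, pow_mul, hc8, hc2]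
    have key1C : (1:F)+b+b^2 ≠ (aU : F) + (aU : F)⁻¹ + 1 := by
      rw [hicoe, hcoe]; intro h
      exact one_ne_zero (α := F) (by linear_combination ((1 : F) + b + b ^ 2) * h + ((1 : F)) * hS + ((1 : F) + b + b ^ 2 + b ^ 4 + b ^ 5 + b ^ 6 + b ^ 7) * h2)
    have key1D : (b:F) + b ^ 4 ≠ (aU : F) + (aU : F)⁻¹ + 1 := by
      rw [hicoe, hcoe]; intro h
      exact one_ne_zero (α := F) (by linear_combination ((1 : F)) * h + ((2 : F) + b ^ 2 + b ^ 5) * h2)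
    have key1E : (1:F) + b ^ 2 + b ^ 4 ≠ (aU : F) + (aU : F)⁻¹ + 1 := by
      rw [hicoe, hcoe]; intro h
      exact one_ne_zero (α := F) (by linear_combination (b + b ^ 4) * h + ((1 : F)) * hS + (b + b ^ 4 + b ^ 6 + b ^ 9) * h2)
    have key2C : (1:F)+b+b^2 ≠ (aU : F) * (1 + b + b ^ 3 + b ^ 4) + (aU : F)⁻¹ * (b ^ 2 + b ^ 3 + b ^ 4) := by
      rw [hicoe, hcoe]; intro h
      exact one_ne_zero (α := F) (by linear_combination (b ^ 2 + b ^ 4) * h + ((1 : F) + b ^ 2 + b ^ 3 + b ^ 5 + b ^ 6) * hS + ((-1) * b ^ 2 + (-1) * b ^ 3 + b ^ 6 + (3) * b ^ 7 + (2) * b ^ 8 + (2) * b ^ 9 + (3) * b ^ 10 + b ^ 11 + b ^ 12 + b ^ 13) * h2)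
    have key2D : (b:F) + b ^ 4 ≠ (aU : F) * (1 + b + b ^ 3 + b ^ 4) + (aU : F)⁻¹ * (b ^ 2 + b ^ 3 + b ^ 4) := by
      rw [hicoe, hcoe]; intro h
      exact one_ne_zero (α := F) (by linear_combination (b + b ^ 2) * h + ((1 : F) + b + b ^ 4) * hS + ((2) * b ^ 4 + (3) * b ^ 5 + (2) * b ^ 6 + (3) * b ^ 7 + (3) * b ^ 8 + (2) * b ^ 9 + (2) * b ^ 10 + b ^ 11) * h2)
    have key2E : (1:F) + b ^ 2 + b ^ 4 ≠ (aU : F) * (1 + b + b ^ 3 + b ^ 4) + (aU : F)⁻¹ * (b ^ 2 + b ^ 3 + b ^ 4) := by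
      rw [hicoe, hcoe]; intro h
      exact one_ne_zero (α := F) (by linear_combination ((1 : F) + b + b ^ 4) * h + ((1 : F) + b + b ^ 2 + b ^ 3 + b ^ 4 + b ^ 5 + b ^ 6) * hS + (b ^ 3 + (2) * b ^ 4 + (2) * b ^ 5 + (2) * b ^ 6 + (3) * b ^ 7 + (2) * b ^ 8 + (3) * b ^ 9 + (2) * b ^ 10 + b ^ 12 + b ^ 13) * h2)
    have key3 : (aU : F) + (aU : F)⁻¹ + 1 ≠ (aU : F) * (1 + b + b ^ 3 + b ^ 4) + (aU : F)⁻¹ * (b ^ 2 + b ^ 3 + b ^ 4) := by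
      rw [hicoe, hcoe]; intro h
      exact one_ne_zero (α := F) (by linear_combination ((1 : F) + b ^ 2 + b ^ 4) * h + ((1 : F) + b ^ 2 + b ^ 3 + b ^ 5 + b ^ 6) * hS + ((-1 : F) + (-2) * b ^ 2 + b ^ 3 + b ^ 5 + (2) * b ^ 6 + (3) * b ^ 7 + (3) * b ^ 8 + (2) * b ^ 9 + (3) * b ^ 10 + b ^ 11 + b ^ 12 + b ^ 13) * h2)
    refine ⟨aU, horder', ?_, ?_, key3, hord3 aU horder'⟩
    · intro i hi
      simp only [Set.mem_insert_iff, Set.mem_singleton_iff] at hi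
      rcases hi with rfl | rfl | rfl | rfl
      · rw [pow_zero, pow_one]; exact key1C
      · rw [show (2:ℕ)^3 = 8 by norm_num, hc8]; exact key1C
      · rw [show (2:ℕ)^(2*3/Nat.gcd 3 3) = 4 by norm_num, hc4]; exact key1D
      · rw [show (2:ℕ)^(4*3/Nat.gcd 3 3) = 16 by norm_num, hc16]; exact key1E
    · intro i hi
      simp only [Set.mem_insert_iff, Set.mem_singleton_iff] at hi
      rcases hi with rfl | rfl | rfl | rfl
      · rw [pow_zero, pow_one]; exact key2C
      · rw [show (2:ℕ)^3 = 8 by norm_num, hc8]; exact key2C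
      · rw [show (2:ℕ)^(2*3/Nat.gcd 3 3) = 4 by norm_num, hc4]; exact key2D
      · rw [show (2:ℕ)^(4*3/Nat.gcd 3 3) = 16 by norm_num, hc16]; exact key2E
  have hf4 : 4 ≤ f := by omega
  -- Frobenius
  have hfrob : ∀ x y : F, (x + y) ^ q = x ^ q + y ^ q := by
    intro x y
    haveI : Fact (Nat.Prime 2) := ⟨Nat.prime_two⟩
    rw [hq]; exact add_pow_char_pow x y 2 f
  have hcq : (1 + b + b ^ 2) ^ q = 1 + b + b ^ 2 := by
    rw [hfrob, hfrob, one_pow, ← pow_mul, mul_comm 2 q, pow_mul, hbq]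
    linear_combination (1 + b) * h2
  set c2 : F := (1 + b + b ^ 2) ^ 2 ^ (2 * f / Nat.gcd 3 f) with hc2
  set c3 : F := (1 + b + b ^ 2) ^ 2 ^ (4 * f / Nat.gcd 3 f) with hc3
  set u : F := 1 + b + b ^ 3 + b ^ 4 with hudef
  set v : F := b ^ 2 + b ^ 3 + b ^ 4 with hvdef
  let Q : F → F → F → Finset Fˣ := fun p qq r =>
    Finset.univ.filter (fun a : Fˣ => p * (a:F)^2 + qq * (a:F) + r = 0)
  have hQ : ∀ p qq r : F, (p ≠ 0 ∨ qq ≠ 0) → (Q p qq r).card ≤ 2 :=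
    fun p qq r h => card_quad_le_two F p qq r h
  have hone : (1 : F) ≠ 0 := one_ne_zero
  let B : Finset Fˣ := Q 1 (1 - (1+b+b^2)) 1 ∪ Q 1 (1 - c2) 1 ∪ Q 1 (1 - c3) 1 ∪
    Q u (-(1+b+b^2)) v ∪ Q u (-c2) v ∪ Q u (-c3) v ∪ Q (1-u) 1 (1-v)
  have hBcard : B.card ≤ 14 := by
    have q1 := hQ 1 (1 - (1+b+b^2)) 1 (Or.inl hone)
    have q2 := hQ 1 (1 - c2) 1 (Or.inl hone)
    have q3 := hQ 1 (1 - c3) 1 (Or.inl hone)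
    have q4 := hQ u (-(1+b+b^2)) v (Or.inl hu)
    have q5 := hQ u (-c2) v (Or.inl hu)
    have q6 := hQ u (-c3) v (Or.inl hu)
    have q7 := hQ (1-u) 1 (1-v) (Or.inr hone)
    calc B.card ≤ (Q 1 (1 - (1+b+b^2)) 1 ∪ Q 1 (1 - c2) 1 ∪ Q 1 (1 - c3) 1 ∪
        Q u (-(1+b+b^2)) v ∪ Q u (-c2) v ∪ Q u (-c3) v).card + (Q (1-u) 1 (1-v)).card :=
          Finset.card_union_le _ _
      _ ≤ ((Q 1 (1 - (1+b+b^2)) 1 ∪ Q 1 (1 - c2) 1 ∪ Q 1 (1 - c3) 1 ∪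
        Q u (-(1+b+b^2)) v ∪ Q u (-c2) v).card + (Q u (-c3) v).card) + (Q (1-u) 1 (1-v)).card := by
          gcongr; exact Finset.card_union_le _ _
      _ ≤ (((Q 1 (1 - (1+b+b^2)) 1 ∪ Q 1 (1 - c2) 1 ∪ Q 1 (1 - c3) 1 ∪
        Q u (-(1+b+b^2)) v).card + (Q u (-c2) v).card) + (Q u (-c3) v).card) + (Q (1-u) 1 (1-v)).card := by
          gcongr; exact Finset.card_union_le _ _
      _ ≤ ((((Q 1 (1 - (1+b+b^2)) 1 ∪ Q 1 (1 - c2) 1 ∪ Q 1 (1 - c3) 1).card +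
        (Q u (-(1+b+b^2)) v).card) + (Q u (-c2) v).card) + (Q u (-c3) v).card) + (Q (1-u) 1 (1-v)).card := by
          gcongr; exact Finset.card_union_le _ _
      _ ≤ (((((Q 1 (1 - (1+b+b^2)) 1 ∪ Q 1 (1 - c2) 1).card + (Q 1 (1 - c3) 1).card) +
        (Q u (-(1+b+b^2)) v).card) + (Q u (-c2) v).card) + (Q u (-c3) v).card) + (Q (1-u) 1 (1-v)).card := by
          gcongr; exact Finset.card_union_le _ _
      _ ≤ ((((((Q 1 (1 - (1+b+b^2)) 1).card + (Q 1 (1 - c2) 1).card) + (Q 1 (1 - c3) 1).card) +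
        (Q u (-(1+b+b^2)) v).card) + (Q u (-c2) v).card) + (Q u (-c3) v).card) + (Q (1-u) 1 (1-v)).card := by
          gcongr; exact Finset.card_union_le _ _
      _ ≤ 14 := by omega
  -- the set of elements of order q+1
  have hScard : (Finset.univ.filter (fun a : Fˣ => orderOf a = q + 1)).card = Nat.totient (q+1) := by
    have := IsCyclic.card_orderOf_eq_totient (α := Fˣ) hdvd
    convert this using 2
  have htot : 14 < Nat.totient (q + 1) := by
    by_cases hf7 : f ≤ 7
    · subst hq
      interval_cases f
      · norm_num [show (2:ℕ)^4+1 = 17 by norm_num, Nat.totient_prime (by norm_num : Nat.Prime 17)]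
      · have : (2:ℕ)^5+1 = 3 * 11 := by norm_num
        rw [this, Nat.totient_mul (by norm_num), Nat.totient_prime (by norm_num : Nat.Prime 3),
          Nat.totient_prime (by norm_num : Nat.Prime 11)]
        norm_num
      · have : (2:ℕ)^6+1 = 5 * 13 := by norm_num
        rw [this, Nat.totient_mul (by norm_num), Nat.totient_prime (by norm_num : Nat.Prime 5),
          Nat.totient_prime (by norm_num : Nat.Prime 13)]
        norm_num
      · have : (2:ℕ)^7+1 = 3 * 43 := by norm_num
        rw [this, Nat.totient_mul (by norm_num), Nat.totient_prime (by norm_num : Nat.Prime 3),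
          Nat.totient_prime (by norm_num : Nat.Prime 43)]
        norm_num
    · have hq257 : 257 ≤ q + 1 := by
        rw [hq]
        have : (2:ℕ)^8 ≤ 2^f := Nat.pow_le_pow_right (by norm_num) (by omega)
        omega
      have hodd : Odd (q + 1) := by
        rw [hq]
        refine Even.add_one ?_
        exact (Nat.even_pow' (by omega)).mpr even_two
      have hsq := le_sq_totient (q+1) hodd
      by_contra hcon
      push_neg at hcon
      have : (q+1).totient ^ 2 ≤ 14 ^ 2 := Nat.pow_le_pow_left hcon 2
      omega
  have hex : ∃ a : Fˣ, a ∈ Finset.univ.filter (fun a : Fˣ => orderOf a = q + 1) ∧ a ∉ B := by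
    by_contra hcon
    push_neg at hcon
    have hsub : Finset.univ.filter (fun a : Fˣ => orderOf a = q + 1) ⊆ B := fun a ha => hcon a ha
    have := Finset.card_le_card hsub
    omega
  obtain ⟨a, haS, haB⟩ := hex
  have haord : orderOf a = q + 1 := (Finset.mem_filter.mp haS).2
  simp only [B, Finset.mem_union, not_or] at haB
  obtain ⟨⟨⟨⟨⟨⟨m1, m2⟩, m3⟩, m4⟩, m5⟩, m6⟩, m7⟩ := haB
  have hmem : ∀ p qq r : F, a ∉ Q p qq r → ¬ (p * (a:F)^2 + qq * (a:F) + r = 0) := by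
    intro p qq r hm he
    exact hm (Finset.mem_filter.mpr ⟨Finset.mem_univ a, he⟩)
  refine ⟨a, haord, ?_, ?_, ?_, hord3 a haord⟩
  · intro i hi
    simp only [Set.mem_insert_iff, Set.mem_singleton_iff] at hi
    have key : ∀ cc : F, a ∉ Q 1 (1 - cc) 1 → cc ≠ (a : F) + (a : F)⁻¹ + 1 := by
      intro cc hm he
      exact hmem 1 (1-cc) 1 hm (by linear_combination (a:F) * he.symm - hainv a)
    rcases hi with rfl | rfl | rfl | rfl
    · simpa using key (1+b+b^2) m1
    · rw [← hq, hcq]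
      exact key (1+b+b^2) m1
    · exact key c2 m2
    · exact key c3 m3
  · intro i hi
    simp only [Set.mem_insert_iff, Set.mem_singleton_iff] at hi
    have key : ∀ cc : F, a ∉ Q u (-cc) v → cc ≠ (a:F) * u + (a:F)⁻¹ * v := by
      intro cc hm he
      exact hmem u (-cc) v hm (by linear_combination (a:F) * he.symm + (-v) * hainv a)
    rcases hi with rfl | rfl | rfl | rfl
    · simpa using key (1+b+b^2) m4
    · rw [← hq, hcq]
      exact key (1+b+b^2) m4
    · exact key c2 m5
    · exact key c3 m6
  · intro he
    exact hmem (1-u) 1 (1-v) m7 (by linear_combination (a:F) * he + (v - 1) * hainv a)
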